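/- Let u ∈ ℝ^F have strictly positive entries, Δ ∈ ℝ^F, and P > 0. The vector v* minimizing ‖|Δ| - v‖² subject to Σ_f u_f v_f² ≤ P and v_f ≥ 0 is: v* = |Δ| if Σ_f u_f Δ_f² ≤ P, and otherwise v*_f = |Δ_f|/(1 + λ u_f) where λ > 0 is the unique scalar satisfying Σ_f u_f (|Δ_f|/(1+λu_f))² = P. -/
import Mathlib


open Finset

lemma ptwise_min' (y x c : ℝ) (hc : 0 < c) :
    ((1 + c) * y - y)^2 + c * y^2 ≤ ((1 + c) * y - x)^2 + c * x^2 := by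
  nlinarith [mul_nonneg (by linarith : (0:ℝ) ≤ 1 + c) (sq_nonneg (x - y))]

lemma ptwise_min (a x c : ℝ) (hc : 0 < c) :
    (a - a / (1 + c))^2 + c * (a / (1 + c))^2 ≤ (a - x)^2 + c * x^2 := by
  have h1 : (0:ℝ) < 1 + c := by linarith
  have ha : (1 + c) * (a / (1 + c)) = a := mul_div_cancel₀ a (ne_of_gt h1)
  have := ptwise_min' (a / (1 + c)) x c hc
  rwa [ha] at this

/-- Optimal power control: the minimizer of ‖|Δ| - v‖² subject to Σ u_f v_f² ≤ P, v ≥ 0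
is |Δ| when feasible, and otherwise |Δ_f|/(1 + λ u_f) for the λ > 0 meeting the
power constraint with equality. -/
theorem optimal_power_control (F : ℕ) (u Δ : Fin F → ℝ) (P : ℝ)
    (hu : ∀ f, 0 < u f) (hP : 0 < P) :
    ((∑ f, u f * (Δ f)^2) ≤ P →
      ∀ v : Fin F → ℝ, (∀ f, 0 ≤ v f) → (∑ f, u f * (v f)^2) ≤ P →
        ∑ f, (|Δ f| - |Δ f|)^2 ≤ ∑ f, (|Δ f| - v f)^2) ∧
    (P < ∑ f, u f * (Δ f)^2 →
      ∀ lam : ℝ, 0 < lam →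
        (∑ f, u f * (|Δ f| / (1 + lam * u f))^2) = P →
        (∀ f, 0 ≤ |Δ f| / (1 + lam * u f)) ∧
        (∑ f, u f * (|Δ f| / (1 + lam * u f))^2) ≤ P ∧
        ∀ v : Fin F → ℝ, (∀ f, 0 ≤ v f) → (∑ f, u f * (v f)^2) ≤ P →
          ∑ f, (|Δ f| - |Δ f| / (1 + lam * u f))^2 ≤ ∑ f, (|Δ f| - v f)^2) := by
  constructor
  · intro _ v _ _
    have : ∀ f : Fin F, (|Δ f| - |Δ f|)^2 = 0 := fun f => by ring
    simp only [this, Finset.sum_const_zero]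
    positivity
  · intro _ lam hlam hEq
    have hpos : ∀ f, 0 < 1 + lam * u f := fun f => by
      have := hu f; nlinarith
    refine ⟨fun f => div_nonneg (abs_nonneg _) (hpos f).le, le_of_eq hEq, ?_⟩
    intro v hv hvP
    have key : ∀ f : Fin F,
        (|Δ f| - |Δ f| / (1 + lam * u f))^2 + lam * (u f * (|Δ f| / (1 + lam * u f))^2)
          ≤ (|Δ f| - v f)^2 + lam * (u f * (v f)^2) := by
      intro f
      have h := ptwise_min (|Δ f|) (v f) (lam * u f) (mul_pos hlam (hu f))
      calc (|Δ f| - |Δ f| / (1 + lam * u f))^2 + lam * (u f * (|Δ f| / (1 + lam * u f))^2)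
          = (|Δ f| - |Δ f| / (1 + lam * u f))^2 + (lam * u f) * (|Δ f| / (1 + lam * u f))^2 := by ring
        _ ≤ (|Δ f| - v f)^2 + (lam * u f) * (v f)^2 := h
        _ = (|Δ f| - v f)^2 + lam * (u f * (v f)^2) := by ring
    have hsum := Finset.sum_le_sum (s := Finset.univ) (fun f _ => key f)
    simp only [Finset.sum_add_distrib, ← Finset.mul_sum] at hsum
    rw [hEq] at hsum
    have : lam * ∑ f, u f * (v f)^2 ≤ lam * P :=
      mul_le_mul_of_nonneg_left hvP hlam.le
    linarith
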